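/- Let X be an I-stable, I-continuous T0 space. Then for every open set U of X, ↟_I U equals the interior of U with respect to the topology τ_SI. -/
import Mathlib


universe u

/-- The specialisation order of a topological space: `x ≤ y` iff `x ∈ closure {y}`. -/
def sle {X : Type u} [TopologicalSpace X] (x y : X) : Prop :=
  x ∈ closure ({y} : Set X)

/-- Upper bounds with respect to the specialisation order. -/
def sUB {X : Type u} [TopologicalSpace X] (A : Set X) : Set X :=
  {u | ∀ a ∈ A, sle a u}

/-- `s` is the least upper bound of `A` with respect to the specialisation order. -/
def sIsLUB {X : Type u} [TopologicalSpace X] (A : Set X) (s : X) : Prop :=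
  s ∈ sUB A ∧ ∀ u ∈ sUB A, sle s u

/-- `x ≪_I y`: for every irreducible set `E` having a supremum above `y`,
some element of `E` is above `x`. -/
def IBelow {X : Type u} [TopologicalSpace X] (x y : X) : Prop :=
  ∀ E : Set X, IsIrreducible E → ∀ s : X, sIsLUB E s → sle y s → ∃ e ∈ E, sle x e

/-- `X` is I-continuous: for every `y`, the set `↡_I y` is irreducible with
least upper bound `y`. -/
def IContinuous (X : Type u) [TopologicalSpace X] : Prop :=
  ∀ y : X, IsIrreducible {x | IBelow x y} ∧ sIsLUB {x | IBelow x y} y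

/-- `X` is I-stable: `↟_I U` is open for every open `U`. -/
def IStable (X : Type u) [TopologicalSpace X] : Prop :=
  ∀ U : Set X, IsOpen U → IsOpen {x : X | ∃ a ∈ U, IBelow a x}

/-- `X` is sup-sober: every closed irreducible set with a supremum is the closure
of that supremum. -/
def SupSober (X : Type u) [TopologicalSpace X] : Prop :=
  ∀ F : Set X, IsClosed F → IsIrreducible F → ∀ s : X, sIsLUB F s → F = closure ({s} : Set X)

/-- The collection σ_I: upper sets (w.r.t. specialisation) inaccessible by suprema of
irreducible sets. -/
def sigmaI (X : Type u) [TopologicalSpace X] : Set (Set X) :=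
  {U | (∀ a ∈ U, ∀ b : X, sle a b → b ∈ U) ∧
       ∀ E : Set X, IsIrreducible E → ∀ s : X, sIsLUB E s → s ∈ U → (U ∩ E).Nonempty}

/-- The irreducibly derived topology τ_SI: open sets inaccessible by suprema of
irreducible sets. -/
def tauSI (X : Type u) [TopologicalSpace X] : Set (Set X) :=
  {U | IsOpen U ∧ ∀ E : Set X, IsIrreducible E → ∀ s : X, sIsLUB E s → s ∈ U → (E ∩ U).Nonempty}

/-- The net `x` I-converges to `y`: there is an irreducible set `E` with a supremum above `y`,
all of whose elements are eventual lower bounds of the net. -/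
def IConv {X : Type u} [TopologicalSpace X] {ι : Type u} [Preorder ι]
    (x : ι → X) (y : X) : Prop :=
  ∃ E : Set X, IsIrreducible E ∧
    (∀ e ∈ E, ∃ i₀ : ι, ∀ i : ι, i₀ ≤ i → sle e (x i)) ∧
    ∃ s : X, sIsLUB E s ∧ sle y s

/-- `D` is directed with respect to the specialisation order. -/
def sDirectedOn {X : Type u} [TopologicalSpace X] (D : Set X) : Prop :=
  ∀ a ∈ D, ∀ b ∈ D, ∃ c ∈ D, sle a c ∧ sle b c

/-- Way-below in the specialisation poset, via nonempty directed sets. -/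
def sWayBelow {X : Type u} [TopologicalSpace X] (x y : X) : Prop :=
  ∀ D : Set X, D.Nonempty → sDirectedOn D → ∀ s : X, sIsLUB D s → sle y s → ∃ d ∈ D, sle x d

/-- `X` is a DI space: the supremum of any irreducible set is also attained as the supremum
of a nonempty directed subset of its lower closure. -/
def DISpace (X : Type u) [TopologicalSpace X] : Prop :=
  ∀ E : Set X, IsIrreducible E → ∀ s : X, sIsLUB E s →
    ∃ D : Set X, D.Nonempty ∧ sDirectedOn D ∧ (∀ d ∈ D, ∃ e ∈ E, sle d e) ∧ sIsLUB D s

/-- `U` is τ_I-open: every net that I-converges to a point of `U` is eventually in `U`. -/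
def TauIOpen {X : Type u} [TopologicalSpace X] (U : Set X) : Prop :=
  ∀ (ι : Type u) [Preorder ι] [Nonempty ι],
    (∀ i j : ι, ∃ k : ι, i ≤ k ∧ j ≤ k) →
    ∀ x : ι → X, ∀ y ∈ U, IConv x y →
    ∃ i₀ : ι, ∀ i : ι, i₀ ≤ i → x i ∈ U

section Aux

variable {X : Type u} [TopologicalSpace X]

theorem sle_refl' (x : X) : sle x x := subset_closure rfl

theorem sle_trans' {a b c : X} (h1 : sle a b) (h2 : sle b c) : sle a c :=
  closure_minimal (Set.singleton_subset_iff.mpr h2) isClosed_closure h1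

theorem mem_open_of_sle {U : Set X} (hU : IsOpen U) {a b : X}
    (ha : a ∈ U) (h : sle a b) : b ∈ U := by
  rcases mem_closure_iff.mp h U hU ha with ⟨c, hcU, hc⟩
  cases hc
  exact hcU

theorem sIsLUB_singleton (x : X) : sIsLUB ({x} : Set X) x := by
  refine ⟨fun a ha => ?_, fun u hu => hu x rfl⟩
  cases ha
  exact sle_refl' x

theorem IBelow_sle {a x : X} (h : IBelow a x) : sle a x := by
  rcases h {x} isIrreducible_singleton x (sIsLUB_singleton x) (sle_refl' x) with ⟨e, he, hae⟩
  cases he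
  exact hae

theorem IBelow_mono_left {a b c : X} (hab : sle a b) (h : IBelow b c) : IBelow a c := by
  intro E hE s hs hcs
  rcases h E hE s hs hcs with ⟨e, he, hbe⟩
  exact ⟨e, he, sle_trans' hab hbe⟩

theorem IBelow_mono_right {a b c : X} (h : IBelow a b) (hbc : sle b c) : IBelow a c := by
  intro E hE s hs hcs
  exact h E hE s hs (sle_trans' hbc hcs)

theorem IBelow_interp (hstable : IStable X) (hcont : IContinuous X)
    {a s : X} (h : IBelow a s) : ∃ b : X, IBelow a b ∧ IBelow b s := by
  set D : Set X := {c | ∃ b, IBelow c b ∧ IBelow b s} with hD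
  have hDne : D.Nonempty := by
    rcases (hcont s).1.1 with ⟨b, hb⟩
    rcases (hcont b).1.1 with ⟨c, hc⟩
    exact ⟨c, b, hc, hb⟩
  have hDpre : IsPreirreducible D := by
    intro u v hu hv ⟨c1, ⟨b1, hc1b1, hb1s⟩, hc1u⟩ ⟨c2, ⟨b2, hc2b2, hb2s⟩, hc2v⟩
    have hU' := hstable u hu
    have hV' := hstable v hv
    rcases (hcont s).1.2 _ _ hU' hV' ⟨b1, hb1s, c1, hc1u, hc1b1⟩
        ⟨b2, hb2s, c2, hc2v, hc2b2⟩ with ⟨b, hbs, ⟨a1, ha1u, ha1b⟩, ⟨a2, ha2v, ha2b⟩⟩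
    rcases (hcont b).1.2 u v hu hv ⟨a1, ha1b, ha1u⟩ ⟨a2, ha2b, ha2v⟩ with
      ⟨c, hcb, hcuv⟩
    exact ⟨c, ⟨b, hcb, hbs⟩, hcuv⟩
  have hDlub : sIsLUB D s := by
    constructor
    · intro c hc
      rcases hc with ⟨b, hcb, hbs⟩
      exact sle_trans' (IBelow_sle hcb) (IBelow_sle hbs)
    · intro u hu
      apply (hcont s).2.2 u
      intro b hbs
      apply (hcont b).2.2 u
      intro c hcb
      exact hu c ⟨b, hcb, hbs⟩
  rcases h D ⟨hDne, hDpre⟩ s hDlub (sle_refl' s) with ⟨c, ⟨b, hcb, hbs⟩, hac⟩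
  exact ⟨b, IBelow_mono_left hac hcb, hbs⟩

end Aux

/-- In an I-stable I-continuous T0 space, `↟_I U` is the τ_SI-interior of an open `U`. -/
theorem stmt15 {X : Type u} [TopologicalSpace X] [T0Space X]
    (hstable : IStable X) (hcont : IContinuous X)
    (U : Set X) (hU : IsOpen U) :
    {x : X | ∃ a ∈ U, IBelow a x} = ⋃₀ {V | V ∈ tauSI X ∧ V ⊆ U} := by
  set W : Set X := {x : X | ∃ a ∈ U, IBelow a x} with hW
  have hWU : W ⊆ U := by
    rintro x ⟨a, haU, hax⟩
    exact mem_open_of_sle hU haU (IBelow_sle hax)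
  have hWtau : W ∈ tauSI X := by
    refine ⟨hstable U hU, ?_⟩
    rintro E hE s hs ⟨a, haU, has⟩
    rcases IBelow_interp hstable hcont has with ⟨b, hab, hbs⟩
    rcases hbs E hE s hs (sle_refl' s) with ⟨e, heE, hbe⟩
    exact ⟨e, heE, a, haU, IBelow_mono_right hab hbe⟩
  ext x
  constructor
  · intro hx
    exact ⟨W, ⟨hWtau, hWU⟩, hx⟩
  · rintro ⟨V, ⟨⟨hVopen, hVacc⟩, hVU⟩, hxV⟩
    rcases hVacc _ (hcont x).1 x (hcont x).2 hxV with ⟨a, hax, haV⟩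
    exact ⟨a, hVU haV, hax⟩
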